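/- Let g_ℝ be a real Lie algebra with complexification g, and let * : U(g) → U(g) be the anti-linear anti-involution extending X ↦ -conj(X) on g (where conj is complex conjugation with respect to g_ℝ). Let V be a g-module endowed with a g_ℝ-invariant Hermitian inner product ⟨·,·⟩ (i.e. ⟨Xv,w⟩ + ⟨v,Xw⟩ = 0 for X ∈ g_ℝ). Then for every nonzero v ∈ V, the annihilator ideal Ann_{Z(g)}(v) in the center Z(g) of U(g) is a *-stable radical ideal, and the same holds for Ann_{Z(g)}(V). -/

import Mathlib

open UniversalEnvelopingAlgebra

/-- Induction principle for the universal enveloping algebra. -/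
theorem uea_induction_aux (R : Type*) (L : Type*) [CommRing R] [LieRing L] [LieAlgebra R L]
    {C : UniversalEnvelopingAlgebra R L → Prop}
    (halg : ∀ r : R, C (algebraMap R (UniversalEnvelopingAlgebra R L) r))
    (hι : ∀ x : L, C (ι R x))
    (hmul : ∀ a b, C a → C b → C (a * b))
    (hadd : ∀ a b, C a → C b → C (a + b))
    (a : UniversalEnvelopingAlgebra R L) : C a := by
  obtain ⟨t, rfl⟩ : ∃ t, mkAlgHom R L t = a := RingCon.mkₐ_surjective (α := R) (ringCon R L) a
  induction t using TensorAlgebra.induction with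
  | algebraMap r => rw [AlgHom.commutes]; exact halg r
  | ι x => exact hι x
  | mul a b ha hb => rw [map_mul]; exact hmul _ _ ha hb
  | add a b ha hb => rw [map_add]; exact hadd _ _ ha hb

/-- Proposition `UnitaryRadicalIdeal`.
Let `g` be a complex Lie algebra with a conjugation `conjL` (complex conjugation with
respect to a real form `g_ℝ`, whose elements are the fixed points of `conjL`), and let
`st` be the anti-linear anti-involution of `U(g)` extending `X ↦ -conjL X`.  Let `V` be a
`U(g)`-module with a `g_ℝ`-invariant Hermitian inner product `B`.  Then for every
`0 ≠ v ∈ V` the annihilator of `v` in the center `Z(g)` of `U(g)` is a `*`-stable radical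
ideal, and likewise for the annihilator of `V`. -/
theorem center_annihilator_star_stable_radical
    (L : Type*) [LieRing L] [LieAlgebra ℂ L]
    (conjL : L → L)
    (hconj_add : ∀ X Y : L, conjL (X + Y) = conjL X + conjL Y)
    (hconj_smul : ∀ (c : ℂ) (X : L), conjL (c • X) = (starRingEnd ℂ) c • conjL X)
    (hconj_bracket : ∀ X Y : L, conjL ⁅X, Y⁆ = ⁅conjL X, conjL Y⁆)
    (hconj_invol : ∀ X : L, conjL (conjL X) = X)
    (st : UniversalEnvelopingAlgebra ℂ L → UniversalEnvelopingAlgebra ℂ L)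
    (hst_add : ∀ a b, st (a + b) = st a + st b)
    (hst_mul : ∀ a b, st (a * b) = st b * st a)
    (hst_smul : ∀ (c : ℂ) a, st (c • a) = (starRingEnd ℂ) c • st a)
    (hst_invol : ∀ a, st (st a) = a)
    (hst_ι : ∀ X : L, st (ι ℂ X) = - ι ℂ (conjL X))
    (V : Type*) [AddCommGroup V] [Module ℂ V]
    [Module (UniversalEnvelopingAlgebra ℂ L) V]
    [IsScalarTower ℂ (UniversalEnvelopingAlgebra ℂ L) V]
    (B : V → V → ℂ)
    (hB_addl : ∀ u v w, B (u + v) w = B u w + B v w)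
    (hB_smull : ∀ (c : ℂ) v w, B (c • v) w = c * B v w)
    (hB_herm : ∀ v w, B v w = (starRingEnd ℂ) (B w v))
    (hB_posdef : ∀ v : V, v ≠ 0 → 0 < (B v v).re ∧ (B v v).im = 0)
    (hB_inv : ∀ X : L, conjL X = X → ∀ v w : V,
      B ((ι ℂ X : UniversalEnvelopingAlgebra ℂ L) • v) w
        + B v ((ι ℂ X : UniversalEnvelopingAlgebra ℂ L) • w) = 0) :
    (∀ v : V, v ≠ 0 →
      (∀ z : UniversalEnvelopingAlgebra ℂ L,
        (∀ u, u * z = z * u) → z • v = 0 → st z • v = 0) ∧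
      (∀ z : UniversalEnvelopingAlgebra ℂ L, (∀ u, u * z = z * u) →
        ∀ n : ℕ, 0 < n → z ^ n • v = 0 → z • v = 0)) ∧
    ((∀ z : UniversalEnvelopingAlgebra ℂ L,
        (∀ u, u * z = z * u) → (∀ w : V, z • w = 0) → ∀ w : V, st z • w = 0) ∧
      (∀ z : UniversalEnvelopingAlgebra ℂ L, (∀ u, u * z = z * u) →
        ∀ n : ℕ, 0 < n → (∀ w : V, z ^ n • w = 0) → ∀ w : V, z • w = 0)) := by
  -- Basic sesquilinearity facts for `B`.
  have hB_addr : ∀ u v w : V, B u (v + w) = B u v + B u w := by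
    intro u v w
    rw [hB_herm u (v + w), hB_addl, map_add, ← hB_herm, ← hB_herm]
  have hB_smulr : ∀ (c : ℂ) (u w : V), B u (c • w) = (starRingEnd ℂ) c * B u w := by
    intro c u w
    rw [hB_herm u (c • w), hB_smull, map_mul, ← hB_herm]
  have hB0l : ∀ w : V, B 0 w = 0 := by
    intro w
    have h : B 0 w + B 0 w = B 0 w + 0 := by rw [← hB_addl, add_zero, add_zero]
    exact add_left_cancel h
  have hB0r : ∀ v : V, B v 0 = 0 := by
    intro v; rw [hB_herm, hB0l, map_zero]
  have hBnn : ∀ u : V, B u u = 0 → u = 0 := by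
    intro u hu
    by_contra h
    have := (hB_posdef u h).1
    rw [hu] at this
    simp at this
  -- `st 1 = 1`.
  have st1 : st 1 = 1 := by
    have h := hst_mul (st 1) 1
    simp only [mul_one, hst_invol] at h
    exact h.symm
  -- `st` of powers.
  have hst_pow : ∀ (z : UniversalEnvelopingAlgebra ℂ L) (n : ℕ), st (z ^ n) = (st z) ^ n := by
    intro z n
    induction n with
    | zero => simpa using st1
    | succ n ih => rw [pow_succ, hst_mul, ih, pow_succ']
  -- The key adjointness property: `B (a • v) w = B v (st a • w)`.
  have hadj : ∀ (a : UniversalEnvelopingAlgebra ℂ L) (v w : V),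
      B (a • v) w = B v (st a • w) := by
    intro a
    induction a using uea_induction_aux with
    | halg r =>
      intro v w
      have e2 : st (algebraMap ℂ (UniversalEnvelopingAlgebra ℂ L) r)
          = algebraMap ℂ (UniversalEnvelopingAlgebra ℂ L) ((starRingEnd ℂ) r) := by
        rw [Algebra.algebraMap_eq_smul_one, hst_smul, st1, ← Algebra.algebraMap_eq_smul_one]
      rw [algebraMap_smul, e2, algebraMap_smul, hB_smull, hB_smulr, Complex.conj_conj]
    | hι X =>
      intro v w
      set Xp : L := X + conjL X with hXpdef
      set Xm : L := Complex.I • conjL X + (-Complex.I) • X with hXmdef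
      have hXp : conjL Xp = Xp := by
        rw [hXpdef, hconj_add, hconj_invol, add_comm]
      have hXm : conjL Xm = Xm := by
        rw [hXmdef, hconj_add, hconj_smul, hconj_smul, hconj_invol, Complex.conj_I, map_neg,
          Complex.conj_I, neg_neg, add_comm]
      set p : UniversalEnvelopingAlgebra ℂ L := ι ℂ Xp with hpdef
      set m : UniversalEnvelopingAlgebra ℂ L := ι ℂ Xm with hmdef
      have hιX : (ι ℂ X : UniversalEnvelopingAlgebra ℂ L)
          = (1 / 2 : ℂ) • p + (Complex.I / 2 : ℂ) • m := by
        rw [hpdef, hmdef, hXpdef, hXmdef, map_add, map_add, map_smul,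
          map_smul]
        match_scalars <;> field_simp <;> rw [Complex.I_sq] <;> ring
      have hstX : st (ι ℂ X : UniversalEnvelopingAlgebra ℂ L)
          = (-(1 / 2) : ℂ) • p + (Complex.I / 2 : ℂ) • m := by
        have hcX : (ι ℂ (conjL X) : UniversalEnvelopingAlgebra ℂ L) = p - ι ℂ X := by
          rw [hpdef, hXpdef, map_add]; abel
        rw [hst_ι, hcX, hιX]
        match_scalars <;> ring
      have hpB : ∀ v w : V, B (p • v) w = - B v (p • w) := fun v w =>
        eq_neg_of_add_eq_zero_left (hB_inv Xp hXp v w)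
      have hmB : ∀ v w : V, B (m • v) w = - B v (m • w) := fun v w =>
        eq_neg_of_add_eq_zero_left (hB_inv Xm hXm v w)
      rw [hstX, hιX, add_smul, add_smul, smul_assoc, smul_assoc, smul_assoc, smul_assoc,
        hB_addl, hB_addr, hB_smull, hB_smull, hB_smulr, hB_smulr, hpB, hmB]
      simp only [map_neg, map_div₀, map_one, map_ofNat, Complex.conj_I]
      ring
    | hmul a b ha hb =>
      intro v w
      rw [mul_smul, ha, hb, ← mul_smul, ← hst_mul]
    | hadd a b ha hb =>
      intro v w
      rw [add_smul, hB_addl, ha, hb, hst_add, add_smul, hB_addr]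
  -- Star-stability for any vector.
  have hstar : ∀ z : UniversalEnvelopingAlgebra ℂ L, (∀ u, u * z = z * u) →
      ∀ w : V, z • w = 0 → st z • w = 0 := by
    intro z hz w hw
    apply hBnn
    calc B (st z • w) (st z • w) = B w (st (st z) • (st z • w)) := hadj _ _ _
      _ = B w ((z * st z) • w) := by rw [hst_invol, ← mul_smul]
      _ = B w ((st z * z) • w) := by rw [hz (st z)]
      _ = B w (st z • (z • w)) := by rw [mul_smul]
      _ = 0 := by rw [hw, smul_zero, hB0r]
  -- Halving for self-adjoint elements.
  have hhalf : ∀ a : UniversalEnvelopingAlgebra ℂ L, st a = a →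
      ∀ (k : ℕ) (w : V), a ^ (2 ^ k) • w = 0 → a • w = 0 := by
    intro a ha k
    induction k with
    | zero => intro w h; simpa using h
    | succ k ih =>
      intro w h
      apply ih w
      apply hBnn
      have hstpow : st (a ^ 2 ^ k) = a ^ 2 ^ k := by rw [hst_pow, ha]
      calc B (a ^ 2 ^ k • w) (a ^ 2 ^ k • w)
          = B w (st (a ^ 2 ^ k) • (a ^ 2 ^ k • w)) := hadj _ _ _
        _ = B w ((a ^ 2 ^ k * a ^ 2 ^ k) • w) := by rw [hstpow, ← mul_smul]
        _ = B w (a ^ 2 ^ (k + 1) • w) := by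
            rw [show (2 : ℕ) ^ (k + 1) = 2 ^ k + 2 ^ k by rw [pow_succ, mul_two], pow_add]
        _ = 0 := by rw [h, hB0r]
  -- Radical property for any vector.
  have hrad : ∀ z : UniversalEnvelopingAlgebra ℂ L, (∀ u, u * z = z * u) →
      ∀ n : ℕ, 0 < n → ∀ w : V, z ^ n • w = 0 → z • w = 0 := by
    intro z hz n hn w hznw
    set a : UniversalEnvelopingAlgebra ℂ L := z * st z with hadef
    have hsa : st a = a := by rw [hadef, hst_mul, hst_invol]
    have hcz : Commute z (st z) := (hz (st z)).symm
    have han : a ^ n • w = 0 := by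
      have : a ^ n = (st z) ^ n * z ^ n := by
        rw [hadef, ← hz (st z), hcz.symm.mul_pow]
      rw [this, mul_smul, hznw, smul_zero]
    have h2k : a ^ (2 ^ n) • w = 0 := by
      rw [show (2 : ℕ) ^ n = (2 ^ n - n) + n from
        (Nat.sub_add_cancel (le_of_lt (Nat.lt_two_pow_self (n := n)))).symm, pow_add, mul_smul, han,
        smul_zero]
    have haw : a • w = 0 := hhalf a hsa n w h2k
    have h2 : st z • w = 0 := by
      apply hBnn
      calc B (st z • w) (st z • w) = B w (st (st z) • (st z • w)) := hadj _ _ _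
        _ = B w ((z * st z) • w) := by rw [hst_invol, ← mul_smul]
        _ = 0 := by rw [← hadef, haw, hB0r]
    have hstz : ∀ u, u * st z = st z * u := by
      intro u
      calc u * st z = st (st u) * st z := by rw [hst_invol]
        _ = st (z * st u) := (hst_mul z (st u)).symm
        _ = st (st u * z) := by rw [hz (st u)]
        _ = st z * st (st u) := hst_mul _ _
        _ = st z * u := by rw [hst_invol]
    have := hstar (st z) hstz w h2
    rwa [hst_invol] at this
  exact ⟨fun v _ => ⟨fun z hz hzv => hstar z hz v hzv,
      fun z hz n hn h => hrad z hz n hn v h⟩,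
    ⟨fun z hz h w => hstar z hz w (h w),
      fun z hz n hn h w => hrad z hz n hn w (h w)⟩⟩
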